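/- Let φ₄ : ℂ[Z₃, Z₇, Z₈] → ℂ[t] be the ℂ-algebra homomorphism determined by Z₃ ↦ t³, Z₇ ↦ t⁷, Z₈ ↦ t⁸. Then the kernel of φ₄ is the ideal generated by the three polynomials Z₇² − Z₃²Z₈, Z₇Z₈ − Z₃⁵, and Z₈² − Z₃³Z₇. -/

import Mathlib

open MvPolynomial

open Polynomial in
/-- Injectivity on normal forms: the supports of `A(t³)`, `t⁷B(t³)`, `t⁸C(t³)` live in
distinct residue classes mod 3. -/
lemma KerPhi4Aux.disj3 (A B C : Polynomial ℂ)
    (h : Polynomial.expand ℂ 3 A + Polynomial.X ^ 7 * Polynomial.expand ℂ 3 B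
        + Polynomial.X ^ 8 * Polynomial.expand ℂ 3 C = 0) :
    A = 0 ∧ B = 0 ∧ C = 0 := by
  have h3 : (0:ℕ) < 3 := by norm_num
  have hc : ∀ n, (Polynomial.expand ℂ 3 A).coeff n
      + (Polynomial.X ^ 7 * Polynomial.expand ℂ 3 B).coeff n
      + (Polynomial.X ^ 8 * Polynomial.expand ℂ 3 C).coeff n = 0 := by
    intro n
    rw [← Polynomial.coeff_add, ← Polynomial.coeff_add, h, Polynomial.coeff_zero]
  refine ⟨Polynomial.ext fun n => ?_, Polynomial.ext fun n => ?_, Polynomial.ext fun n => ?_⟩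
  · have := hc (3*n)
    rw [Polynomial.coeff_X_pow_mul', Polynomial.coeff_X_pow_mul',
      Polynomial.coeff_expand h3, Polynomial.coeff_expand h3, Polynomial.coeff_expand h3] at this
    simp only [Polynomial.coeff_zero]
    split_ifs at this with h1 h2 h4 h5 h6 h7 h8 <;> first
      | (exfalso; omega)
      | (simp_all; try omega)
  · have := hc (3*n+7)
    rw [Polynomial.coeff_X_pow_mul', Polynomial.coeff_X_pow_mul',
      Polynomial.coeff_expand h3, Polynomial.coeff_expand h3, Polynomial.coeff_expand h3] at this
    simp only [Polynomial.coeff_zero]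
    split_ifs at this with h1 h2 h4 h5 h6 h7 h8 <;> first
      | (exfalso; omega)
      | (have : B.coeff ((3*n+7-7)/3) = 0 := by simp_all
         simpa [Nat.mul_div_cancel_left] using this)
  · have := hc (3*n+8)
    rw [Polynomial.coeff_X_pow_mul', Polynomial.coeff_X_pow_mul',
      Polynomial.coeff_expand h3, Polynomial.coeff_expand h3, Polynomial.coeff_expand h3] at this
    simp only [Polynomial.coeff_zero]
    split_ifs at this with h1 h2 h4 h5 h6 h7 h8 <;> first
      | (exfalso; omega)
      | (have : C.coeff ((3*n+8-8)/3) = 0 := by simp_all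
         simpa [Nat.mul_div_cancel_left] using this)

/-- The embedding `ℂ[t] → ℂ[Z₃,Z₇,Z₈]`, `t ↦ Z₃`. -/
noncomputable abbrev KerPhi4Aux.eX0 : Polynomial ℂ →ₐ[ℂ] MvPolynomial (Fin 3) ℂ :=
  Polynomial.aeval (MvPolynomial.X 0)

open KerPhi4Aux in
/-- Every polynomial reduces modulo the ideal to `A(Z₃) + B(Z₃)Z₇ + C(Z₃)Z₈`. -/
lemma KerPhi4Aux.reduce3 (f : MvPolynomial (Fin 3) ℂ) :
    ∃ A B C : Polynomial ℂ,
      f - (eX0 A + eX0 B * X 1 + eX0 C * X 2) ∈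
        Ideal.span {(X 1 : MvPolynomial (Fin 3) ℂ) ^ 2 - (X 0) ^ 2 * X 2,
          X 1 * X 2 - (X 0) ^ 5, (X 2) ^ 2 - (X 0) ^ 3 * X 1} := by
  set I := Ideal.span {(X 1 : MvPolynomial (Fin 3) ℂ) ^ 2 - (X 0) ^ 2 * X 2,
          X 1 * X 2 - (X 0) ^ 5, (X 2) ^ 2 - (X 0) ^ 3 * X 1} with hI
  have g1 : (X 1 : MvPolynomial (Fin 3) ℂ) ^ 2 - (X 0) ^ 2 * X 2 ∈ I :=
    Ideal.subset_span (by simp)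
  have g2 : (X 1 : MvPolynomial (Fin 3) ℂ) * X 2 - (X 0) ^ 5 ∈ I :=
    Ideal.subset_span (by simp)
  have g3 : (X 2 : MvPolynomial (Fin 3) ℂ) ^ 2 - (X 0) ^ 3 * X 1 ∈ I :=
    Ideal.subset_span (by simp)
  induction f using MvPolynomial.induction_on with
  | C a =>
      exact ⟨Polynomial.C a, 0, 0, by simp⟩
  | add p q hp hq =>
      obtain ⟨A, B, C, hp⟩ := hp
      obtain ⟨A', B', C', hq⟩ := hq
      refine ⟨A + A', B + B', C + C', ?_⟩
      have := I.add_mem hp hq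
      convert this using 1
      simp only [map_add]
      ring
  | mul_X p i hp =>
      obtain ⟨A, B, C, hp⟩ := hp
      have hmul : (p - (eX0 A + eX0 B * X 1 + eX0 C * X 2)) * X i ∈ I :=
        I.mul_mem_right _ hp
      fin_cases i <;> simp only [Fin.zero_eta, Fin.mk_one, Fin.reduceFinMk, Fin.isValue] at hmul ⊢
      · refine ⟨A * Polynomial.X, B * Polynomial.X, C * Polynomial.X, ?_⟩
        convert hmul using 1
        simp only [map_mul, Polynomial.aeval_X]
        ring
      · refine ⟨C * Polynomial.X ^ 5, A, B * Polynomial.X ^ 2, ?_⟩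
        have := I.add_mem hmul (I.add_mem (I.mul_mem_left (eX0 B) g1) (I.mul_mem_left (eX0 C) g2))
        convert this using 1
        simp only [map_mul, map_pow, Polynomial.aeval_X]
        ring
      · refine ⟨B * Polynomial.X ^ 5, C * Polynomial.X ^ 3, A, ?_⟩
        have := I.add_mem hmul (I.add_mem (I.mul_mem_left (eX0 B) g2) (I.mul_mem_left (eX0 C) g3))
        convert this using 1
        simp only [map_mul, map_pow, Polynomial.aeval_X]
        ring

open KerPhi4Aux in
lemma KerPhi4Aux.aeval_eX0 (A : Polynomial ℂ) :
    (MvPolynomial.aeval (![Polynomial.X ^ 3, Polynomial.X ^ 7, Polynomial.X ^ 8] :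
      Fin 3 → Polynomial ℂ)) (eX0 A) = Polynomial.expand ℂ 3 A := by
  rw [show (MvPolynomial.aeval _) (eX0 A) = Polynomial.aeval
      ((MvPolynomial.aeval (![Polynomial.X ^ 3, Polynomial.X ^ 7, Polynomial.X ^ 8] :
        Fin 3 → Polynomial ℂ)) (MvPolynomial.X 0)) A from
    (Polynomial.aeval_algHom_apply _ _ _).symm]
  simp only [MvPolynomial.aeval_X, Matrix.cons_val_zero]
  rw [Polynomial.aeval_def, Polynomial.algebraMap_eq, ← Polynomial.coe_expand]

/-- `φ₄ : ℂ[Z₃, Z₇, Z₈] → ℂ[t]`, `Z₃ ↦ t³`, `Z₇ ↦ t⁷`, `Z₈ ↦ t⁸`.  Its kernel is generated by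
`Z₇² − Z₃²Z₈`, `Z₇Z₈ − Z₃⁵` and `Z₈² − Z₃³Z₇`.  (Variables: `X 0 = Z₃`, `X 1 = Z₇`, `X 2 = Z₈`.) -/
theorem ker_phi4 :
    RingHom.ker (MvPolynomial.aeval
        (![Polynomial.X ^ 3, Polynomial.X ^ 7, Polynomial.X ^ 8] :
          Fin 3 → Polynomial ℂ) : MvPolynomial (Fin 3) ℂ →ₐ[ℂ] Polynomial ℂ) =
      Ideal.span {(X 1 : MvPolynomial (Fin 3) ℂ) ^ 2 - (X 0) ^ 2 * X 2,
        X 1 * X 2 - (X 0) ^ 5,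
        (X 2) ^ 2 - (X 0) ^ 3 * X 1} := by
  have hle : Ideal.span {(X 1 : MvPolynomial (Fin 3) ℂ) ^ 2 - (X 0) ^ 2 * X 2,
        X 1 * X 2 - (X 0) ^ 5, (X 2) ^ 2 - (X 0) ^ 3 * X 1} ≤
      RingHom.ker (MvPolynomial.aeval
        (![Polynomial.X ^ 3, Polynomial.X ^ 7, Polynomial.X ^ 8] :
          Fin 3 → Polynomial ℂ) : MvPolynomial (Fin 3) ℂ →ₐ[ℂ] Polynomial ℂ) := by
    rw [Ideal.span_le]
    rintro p (rfl | rfl | rfl) <;>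
      · simp only [SetLike.mem_coe, RingHom.mem_ker, RingHom.coe_coe, map_sub, map_mul, map_pow,
          MvPolynomial.aeval_X, Matrix.cons_val_zero, Matrix.cons_val_one, Matrix.head_cons,
          Matrix.cons_val_two, Matrix.tail_cons]
        ring
  refine le_antisymm ?_ hle
  intro f hf
  rw [RingHom.mem_ker] at hf
  obtain ⟨A, B, C, hm⟩ := KerPhi4Aux.reduce3 f
  have hker := hle hm
  rw [RingHom.mem_ker] at hker
  have hN : (MvPolynomial.aeval (![Polynomial.X ^ 3, Polynomial.X ^ 7, Polynomial.X ^ 8] :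
      Fin 3 → Polynomial ℂ)) (KerPhi4Aux.eX0 A + KerPhi4Aux.eX0 B * X 1
        + KerPhi4Aux.eX0 C * X 2) = 0 := by
    have : (MvPolynomial.aeval (![Polynomial.X ^ 3, Polynomial.X ^ 7, Polynomial.X ^ 8] :
        Fin 3 → Polynomial ℂ)) f - (MvPolynomial.aeval (![Polynomial.X ^ 3, Polynomial.X ^ 7,
          Polynomial.X ^ 8] : Fin 3 → Polynomial ℂ)) (KerPhi4Aux.eX0 A
          + KerPhi4Aux.eX0 B * X 1 + KerPhi4Aux.eX0 C * X 2) = 0 := by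
      rw [← map_sub]; exact hker
    rw [hf, zero_sub, neg_eq_zero] at this
    exact this
  rw [map_add, map_add, map_mul, map_mul, KerPhi4Aux.aeval_eX0, KerPhi4Aux.aeval_eX0,
    KerPhi4Aux.aeval_eX0, MvPolynomial.aeval_X, MvPolynomial.aeval_X] at hN
  simp only [Matrix.cons_val_one, Matrix.head_cons, Matrix.cons_val_two, Matrix.tail_cons,
    Matrix.cons_val_zero] at hN
  obtain ⟨hA, hB, hC⟩ := KerPhi4Aux.disj3 A B C (by rw [← hN]; ring)
  subst hA; subst hB; subst hC
  simpa using hm
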